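/- For i ∈ {1,2,3,4}, let C_i ⊆ V_i be proper cones. Fix k ≥ 1, let E_1,…,E_N : V1 → V2^{⊗k} be (C1, C2^{⊗max k})-positive maps and D_1,…,D_N : V3^{⊗k} → V4 be (C3^{⊗min k}, C4)-positive maps. If P : V2 → V3 is (C2,C3)-entanglement annihilating, then the map Q = Σ_{i=1}^N D_i ∘ P^{⊗k} ∘ E_i is (C1,C4)-entanglement annihilating. -/

import Mathlib

open scoped TensorProduct
open Set

noncomputable section

/-- The dual cone of a set `C`, inside the algebraic dual space. -/
def dualConeSet {V : Type*} [AddCommGroup V] [Module ℝ V] (C : Set V) :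
    Set (Module.Dual ℝ V) := {φ | ∀ x ∈ C, 0 ≤ φ x}

/-- A proper cone: a closed convex cone which is generating (`C - C = V`) and
pointed (`C ∩ (-C) = {0}`). -/
def IsProperCone {V : Type*} [NormedAddCommGroup V] [NormedSpace ℝ V] (C : Set V) : Prop :=
  IsClosed C ∧ Convex ℝ C ∧ (∀ ⦃c : ℝ⦄, 0 < c → ∀ ⦃x⦄, x ∈ C → c • x ∈ C) ∧
    (∀ v : V, ∃ x ∈ C, ∃ y ∈ C, v = x - y) ∧ C ∩ (-C) = {0}

/-- `(C₁,C₂)`-entanglement breaking maps. -/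
def IsEntanglementBreaking {V₁ V₂ : Type*} [AddCommGroup V₁] [Module ℝ V₁]
    [AddCommGroup V₂] [Module ℝ V₂] (C₁ : Set V₁) (C₂ : Set V₂) (P : V₁ →ₗ[ℝ] V₂) : Prop :=
  ∃ (m : ℕ) (φ : Fin m → Module.Dual ℝ V₁) (x : Fin m → V₂),
    (∀ i, φ i ∈ dualConeSet C₁) ∧ (∀ i, x i ∈ C₂) ∧ ∀ v, P v = ∑ i, φ i v • x i

/-- The `k`-fold minimal tensor power of a cone. -/
def minTensorPow {V : Type*} [AddCommGroup V] [Module ℝ V] (C : Set V) (k : ℕ) :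
    Set (⨂[ℝ] _ : Fin k, V) :=
  convexHull ℝ {z | ∃ x : Fin k → V, (∀ i, x i ∈ C) ∧ z = PiTensorProduct.tprod ℝ x}

/-- The functional on the `k`-fold tensor power induced by a family of functionals,
`x₁ ⊗ ⋯ ⊗ x_k ↦ ∏ i, φ i (x i)`. -/
def dualPairing {V : Type*} [AddCommGroup V] [Module ℝ V] {k : ℕ}
    (φ : Fin k → Module.Dual ℝ V) : (⨂[ℝ] _ : Fin k, V) →ₗ[ℝ] ℝ :=
  PiTensorProduct.lift ((MultilinearMap.mkPiAlgebra ℝ (Fin k) ℝ).compLinearMap φ)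

/-- The `k`-fold maximal tensor power of a cone: the dual of the minimal tensor power of
the dual cone, under the canonical identification of `(V^{⊗k})*` with `(V*)^{⊗k}`. -/
def maxTensorPow {V : Type*} [AddCommGroup V] [Module ℝ V] (C : Set V) (k : ℕ) :
    Set (⨂[ℝ] _ : Fin k, V) :=
  {z | ∀ φ : Fin k → Module.Dual ℝ V, (∀ i, φ i ∈ dualConeSet C) → 0 ≤ dualPairing φ z}

/-- `(C₁,C₂)`-entanglement annihilating maps: `P^{⊗k}` maps the `k`-fold maximal tensor power
of `C₁` into the `k`-fold minimal tensor power of `C₂`, for every `k ≥ 1`. -/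
def IsEntanglementAnnihilating {V₁ V₂ : Type*} [AddCommGroup V₁] [Module ℝ V₁]
    [AddCommGroup V₂] [Module ℝ V₂] (C₁ : Set V₁) (C₂ : Set V₂) (P : V₁ →ₗ[ℝ] V₂) : Prop :=
  ∀ k : ℕ, 1 ≤ k →
    Set.MapsTo (⇑(PiTensorProduct.map fun _ : Fin k => P))
      (maxTensorPow C₁ k) (minTensorPow C₂ k)

/-- A pair of cones is resilient if every entanglement annihilating map between them is
entanglement breaking. -/
def IsResilientPair {V₁ V₂ : Type*} [AddCommGroup V₁] [Module ℝ V₁]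
    [AddCommGroup V₂] [Module ℝ V₂] (C₁ : Set V₁) (C₂ : Set V₂) : Prop :=
  ∀ P : V₁ →ₗ[ℝ] V₂, IsEntanglementAnnihilating C₁ C₂ P → IsEntanglementBreaking C₁ C₂ P

/-- The minimal tensor product of two cones. -/
def minTensor {V W : Type*} [AddCommGroup V] [Module ℝ V] [AddCommGroup W] [Module ℝ W]
    (C : Set V) (D : Set W) : Set (V ⊗[ℝ] W) :=
  convexHull ℝ {z | ∃ x ∈ C, ∃ y ∈ D, z = x ⊗ₜ[ℝ] y}

/-- The maximal tensor product of two cones: the dual of the minimal tensor product of the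
dual cones, under the canonical identification of `(V ⊗ W)*` with `V* ⊗ W*`. -/
def maxTensor {V W : Type*} [AddCommGroup V] [Module ℝ V] [AddCommGroup W] [Module ℝ W]
    (C : Set V) (D : Set W) : Set (V ⊗[ℝ] W) :=
  {z | ∀ φ ∈ dualConeSet C, ∀ ψ ∈ dualConeSet D,
      0 ≤ TensorProduct.dualDistrib ℝ V W (φ ⊗ₜ[ℝ] ψ) z}

/-- The Lorentz cone `L_n ⊆ ℝ ⊕ ℝⁿ`. -/

def lorentzCone (n : ℕ) : Set (ℝ × EuclideanSpace ℝ (Fin n)) := {p | ‖p.2‖ ≤ p.1}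

/-! ### Auxiliary lemmas -/

section Aux

open PiTensorProduct

variable {V W : Type*} [AddCommGroup V] [Module ℝ V] [AddCommGroup W] [Module ℝ W]

theorem dualPairing_tprod {k : ℕ} (φ : Fin k → Module.Dual ℝ V) (x : Fin k → V) :
    dualPairing φ (PiTensorProduct.tprod ℝ x) = ∏ i, φ i (x i) := by
  simp [dualPairing]

theorem dualPairing_map {m : ℕ} (g : Fin m → V →ₗ[ℝ] W) (φ : Fin m → Module.Dual ℝ W)
    (z : ⨂[ℝ] _ : Fin m, V) :
    dualPairing φ (PiTensorProduct.map g z) = dualPairing (fun j => (φ j) ∘ₗ (g j)) z := by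
  have h : (dualPairing φ) ∘ₗ (PiTensorProduct.map g) = dualPairing (fun j => (φ j) ∘ₗ (g j)) := by
    apply PiTensorProduct.ext
    apply MultilinearMap.ext
    intro x
    simp [dualPairing_tprod]
  exact LinearMap.congr_fun h z

theorem mapsTo_maxPow (A : Set V) (B : Set W) {m : ℕ} (g : Fin m → V →ₗ[ℝ] W)
    (hg : ∀ j, Set.MapsTo (g j) A B) :
    Set.MapsTo (PiTensorProduct.map g) (maxTensorPow A m) (maxTensorPow B m) := by
  intro z hz φ hφ
  rw [dualPairing_map]
  exact hz _ (fun j x hx => hφ j _ (hg j hx))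

theorem linear_image_convexHull_subset (f : V →ₗ[ℝ] W) (s : Set V) (t : Set W)
    (h : ∀ x ∈ s, f x ∈ t) : ∀ z ∈ convexHull ℝ s, f z ∈ convexHull ℝ t := by
  intro z hz
  have h1 : f z ∈ convexHull ℝ (f '' s) := by
    rw [← f.image_convexHull]
    exact Set.mem_image_of_mem f hz
  exact convexHull_mono (by rintro _ ⟨x, hx, rfl⟩; exact h x hx) h1

theorem tprod_mem_minPow (C : Set V) {m : ℕ} (x : Fin m → V) (hx : ∀ i, x i ∈ C) :
    PiTensorProduct.tprod ℝ x ∈ minTensorPow C m := by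
  unfold minTensorPow
  exact subset_convexHull ℝ _ ⟨x, hx, rfl⟩

theorem mapsTo_minPow (A : Set V) (B : Set W) {m : ℕ} (g : Fin m → V →ₗ[ℝ] W)
    (hg : ∀ j, Set.MapsTo (g j) A B) :
    Set.MapsTo (PiTensorProduct.map g) (minTensorPow A m) (minTensorPow B m) := by
  intro z hz
  unfold minTensorPow at hz ⊢
  refine linear_image_convexHull_subset _ _ _ ?_ z hz
  rintro _ ⟨x, hx, rfl⟩
  exact ⟨fun j => g j (x j), fun j => hg j (hx j), by rw [PiTensorProduct.map_tprod]⟩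

theorem zero_mem_minPow (C : Set V) (hC0 : (0 : V) ∈ C) {m : ℕ} (hm : 1 ≤ m) :
    (0 : ⨂[ℝ] _ : Fin m, V) ∈ minTensorPow C m := by
  have h0 : (0 : ⨂[ℝ] _ : Fin m, V) = PiTensorProduct.tprod ℝ (fun _ => (0 : V)) :=
    ((PiTensorProduct.tprod ℝ).map_coord_zero (⟨0, hm⟩ : Fin m) rfl).symm
  rw [h0]
  exact tprod_mem_minPow C _ (fun _ => hC0)

theorem smul_mem_minPow (C : Set V) (hCs : ∀ ⦃c : ℝ⦄, 0 < c → ∀ ⦃x⦄, x ∈ C → c • x ∈ C)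
    {m : ℕ} (hm : 1 ≤ m) {c : ℝ} (hc : 0 < c) {z : ⨂[ℝ] _ : Fin m, V}
    (hz : z ∈ minTensorPow C m) : c • z ∈ minTensorPow C m := by
  classical
  set i0 : Fin m := ⟨0, hm⟩
  set G : Set (⨂[ℝ] _ : Fin m, V) :=
    {z | ∃ x : Fin m → V, (∀ i, x i ∈ C) ∧ z = PiTensorProduct.tprod ℝ x} with hG
  have hmain : ∀ x ∈ G,
      (c • (LinearMap.id : (⨂[ℝ] _ : Fin m, V) →ₗ[ℝ] _)) x ∈ G := by
    rintro _ ⟨x, hx, rfl⟩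
    refine ⟨Function.update x i0 (c • x i0), ?_, ?_⟩
    · intro i
      rcases eq_or_ne i i0 with h | h
      · rw [h, Function.update_self]; exact hCs hc (hx i0)
      · rw [Function.update_of_ne h]; exact hx i
    · rw [MultilinearMap.map_update_smul, Function.update_eq_self]
      simp
  have := linear_image_convexHull_subset
    (c • (LinearMap.id : (⨂[ℝ] _ : Fin m, V) →ₗ[ℝ] _)) G G hmain z hz
  exact (by simpa using this : c • z ∈ convexHull ℝ G)

theorem add_mem_minPow (C : Set V) (hCs : ∀ ⦃c : ℝ⦄, 0 < c → ∀ ⦃x⦄, x ∈ C → c • x ∈ C)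
    {m : ℕ} (hm : 1 ≤ m) {a b : ⨂[ℝ] _ : Fin m, V}
    (ha : a ∈ minTensorPow C m) (hb : b ∈ minTensorPow C m) :
    a + b ∈ minTensorPow C m := by
  have hmid : (1/2 : ℝ) • a + (1/2 : ℝ) • b ∈ minTensorPow C m :=
    (convex_convexHull ℝ _) ha hb (by norm_num) (by norm_num) (by norm_num)
  have h2 : (2 : ℝ) • ((1/2 : ℝ) • a + (1/2 : ℝ) • b) = a + b := by
    rw [smul_add, smul_smul, smul_smul]; norm_num
  rw [← h2]
  exact smul_mem_minPow C hCs hm (by norm_num) hmid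

theorem sum_mem_minPow (C : Set V) (hC0 : (0 : V) ∈ C)
    (hCs : ∀ ⦃c : ℝ⦄, 0 < c → ∀ ⦃x⦄, x ∈ C → c • x ∈ C) {m : ℕ} (hm : 1 ≤ m)
    {α : Type*} (s : Finset α) (g : α → ⨂[ℝ] _ : Fin m, V)
    (hg : ∀ a ∈ s, g a ∈ minTensorPow C m) :
    ∑ a ∈ s, g a ∈ minTensorPow C m :=
  Finset.sum_induction g (· ∈ minTensorPow C m)
    (fun _ _ hx hy => add_mem_minPow C hCs hm hx hy) (zero_mem_minPow C hC0 hm) hg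

/-- Doubly pure tensors span the nested tensor power. -/
theorem span_nested (m k : ℕ) :
    Submodule.span ℝ {z : ⨂[ℝ] _ : Fin m, (⨂[ℝ] _ : Fin k, V) |
      ∃ x : Fin m → Fin k → V,
        z = PiTensorProduct.tprod ℝ (fun j => PiTensorProduct.tprod ℝ (x j))} = ⊤ := by
  classical
  set S : Set (⨂[ℝ] _ : Fin m, (⨂[ℝ] _ : Fin k, V)) :=
    {z | ∃ x : Fin m → Fin k → V,
      z = PiTensorProduct.tprod ℝ (fun j => PiTensorProduct.tprod ℝ (x j))} with hS
  rw [eq_top_iff, ← PiTensorProduct.span_tprod_eq_top, Submodule.span_le]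
  rintro _ ⟨w, rfl⟩
  suffices H : ∀ n : ℕ, ∀ w : Fin m → (⨂[ℝ] _ : Fin k, V),
      (∀ i : Fin m, n ≤ (i : ℕ) → ∃ x, w i = PiTensorProduct.tprod ℝ x) →
      PiTensorProduct.tprod ℝ w ∈ Submodule.span ℝ S by
    exact H m w (fun i hi => absurd i.2 (by omega))
  intro n
  induction n with
  | zero =>
    intro w hw
    choose x hx using fun i => hw i (Nat.zero_le _)
    apply Submodule.subset_span
    exact ⟨x, by rw [funext hx]⟩
  | succ n ih =>
    intro w hw
    by_cases hn : n < m
    · set jn : Fin m := ⟨n, hn⟩ with hjn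
      have hwjn : w jn ∈ Submodule.span ℝ (Set.range (PiTensorProduct.tprod ℝ)) := by
        rw [PiTensorProduct.span_tprod_eq_top]; trivial
      have key : PiTensorProduct.tprod ℝ (Function.update w jn (w jn)) ∈ Submodule.span ℝ S := by
        refine Submodule.span_induction
          (p := fun u _ => PiTensorProduct.tprod ℝ (Function.update w jn u) ∈ Submodule.span ℝ S)
          ?_ ?_ ?_ ?_ hwjn
        · rintro _ ⟨y, rfl⟩
          show PiTensorProduct.tprod ℝ (Function.update w jn (PiTensorProduct.tprod ℝ y)) ∈ _
          refine ih _ (fun i hi => ?_)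
          rcases eq_or_ne i jn with h | h
          · subst h; rw [Function.update_self]; exact ⟨y, rfl⟩
          · rw [Function.update_of_ne h]
            refine hw i ?_
            have : (i : ℕ) ≠ n := fun hc => h (Fin.ext hc)
            omega
        · show PiTensorProduct.tprod ℝ (Function.update w jn 0) ∈ _
          rw [MultilinearMap.map_update_zero]
          exact Submodule.zero_mem _
        · intro u v _ _ hu hv
          show PiTensorProduct.tprod ℝ (Function.update w jn (u + v)) ∈ _
          rw [MultilinearMap.map_update_add]
          exact Submodule.add_mem _ hu hv
        · intro c u _ hu
          show PiTensorProduct.tprod ℝ (Function.update w jn (c • u)) ∈ _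
          rw [MultilinearMap.map_update_smul]
          exact Submodule.smul_mem _ _ hu
      rwa [Function.update_eq_self] at key
    · exact ih w (fun i hi => hw i (by omega))

variable (V) in
/-- The regrouping map `⨂_{Fin (m*k)} V →ₗ ⨂_{Fin m} ⨂_{Fin k} V`. -/
def expandMap (m k : ℕ) :
    (⨂[ℝ] _ : Fin (m * k), V) →ₗ[ℝ] ⨂[ℝ] _ : Fin m, (⨂[ℝ] _ : Fin k, V) := by
  classical
  refine PiTensorProduct.lift ?_
  have key : ∀ (x : Fin (m * k) → V) (p : Fin (m * k)) (u : V),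
      (fun j => PiTensorProduct.tprod ℝ
        (fun i => Function.update x p u (finProdFinEquiv (j, i)))) =
      Function.update
        (fun j => PiTensorProduct.tprod ℝ (fun i => x (finProdFinEquiv (j, i))))
        (finProdFinEquiv.symm p).1
        (PiTensorProduct.tprod ℝ
          (Function.update (fun i => x (finProdFinEquiv ((finProdFinEquiv.symm p).1, i)))
            (finProdFinEquiv.symm p).2 u)) := by
    intro x p u
    have hep : finProdFinEquiv ((finProdFinEquiv.symm p).1, (finProdFinEquiv.symm p).2) = p :=
      Equiv.apply_symm_apply _ p
    funext j
    rcases eq_or_ne j (finProdFinEquiv.symm p).1 with h | h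
    · subst h
      rw [Function.update_self]
      congr 1
      funext i
      rcases eq_or_ne i (finProdFinEquiv.symm p).2 with h2 | h2
      · subst h2
        rw [Function.update_self, hep, Function.update_self]
      · rw [Function.update_of_ne h2, Function.update_of_ne]
        intro hc
        exact h2 (by
          have := congrArg (fun q => (finProdFinEquiv.symm q).2) hc
          simpa using this)
    · rw [Function.update_of_ne h]
      congr 1
      funext i
      rw [Function.update_of_ne]
      intro hc
      exact h (by
        have := congrArg (fun q => (finProdFinEquiv.symm q).1) hc
        simpa using this)
  exact
  { toFun := fun x => PiTensorProduct.tprod ℝ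
      (fun j => PiTensorProduct.tprod ℝ (fun i => x (finProdFinEquiv (j, i))))
    map_update_add' := by
      intro inst x p u v
      beta_reduce
      rw [Subsingleton.elim inst (instDecidableEqFin (m * k))]
      rw [key x p (u + v), key x p u, key x p v,
        MultilinearMap.map_update_add, MultilinearMap.map_update_add]
    map_update_smul' := by
      intro inst x p c u
      beta_reduce
      rw [Subsingleton.elim inst (instDecidableEqFin (m * k))]
      rw [key x p (c • u), key x p u,
        MultilinearMap.map_update_smul, MultilinearMap.map_update_smul] }

@[simp] theorem expandMap_tprod (m k : ℕ) (x : Fin (m * k) → V) :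
    expandMap V m k (PiTensorProduct.tprod ℝ x) =
      PiTensorProduct.tprod ℝ
        (fun j => PiTensorProduct.tprod ℝ (fun i => x (finProdFinEquiv (j, i)))) := by
  simp [expandMap]

theorem expandMap_surjective (m k : ℕ) : Function.Surjective (expandMap V m k) := by
  rw [← LinearMap.range_eq_top, eq_top_iff, ← span_nested m k, Submodule.span_le]
  rintro _ ⟨x, rfl⟩
  refine ⟨PiTensorProduct.tprod ℝ
    (fun p => x (finProdFinEquiv.symm p).1 (finProdFinEquiv.symm p).2), ?_⟩
  rw [expandMap_tprod]
  simp

theorem dualPairing_expand (m k : ℕ) (φ : Fin (m * k) → Module.Dual ℝ V)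
    (u : ⨂[ℝ] _ : Fin (m * k), V) :
    dualPairing (fun j => dualPairing (fun i => φ (finProdFinEquiv (j, i))))
      (expandMap V m k u) = dualPairing φ u := by
  have h : (dualPairing (fun j => dualPairing (fun i => φ (finProdFinEquiv (j, i))))) ∘ₗ
      expandMap V m k = dualPairing φ := by
    apply PiTensorProduct.ext
    apply MultilinearMap.ext
    intro x
    simp only [LinearMap.compMultilinearMap_apply, LinearMap.coe_comp, Function.comp_apply,
      expandMap_tprod, dualPairing_tprod]
    exact (Fintype.prod_prod_type
      (fun q : Fin m × Fin k => φ (finProdFinEquiv q) (x (finProdFinEquiv q)))).symm.trans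
      (Equiv.prod_comp finProdFinEquiv (fun p => φ p (x p)))
  exact LinearMap.congr_fun h u

theorem expand_naturality (m k : ℕ) (P : V →ₗ[ℝ] W) :
    (PiTensorProduct.map (fun _ : Fin m => PiTensorProduct.map (fun _ : Fin k => P))) ∘ₗ
      expandMap V m k =
    expandMap W m k ∘ₗ PiTensorProduct.map (fun _ : Fin (m * k) => P) := by
  apply PiTensorProduct.ext
  apply MultilinearMap.ext
  intro x
  simp

theorem expand_mem_nested_min (C : Set V) (m k : ℕ)
    {v : ⨂[ℝ] _ : Fin (m * k), V} (hv : v ∈ minTensorPow C (m * k)) :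
    expandMap V m k v ∈ minTensorPow (minTensorPow C k) m := by
  unfold minTensorPow at hv ⊢
  refine linear_image_convexHull_subset _ _ _ ?_ v hv
  rintro _ ⟨x, hx, rfl⟩
  refine ⟨fun j => PiTensorProduct.tprod ℝ (fun i => x (finProdFinEquiv (j, i))), fun j => ?_,
    by rw [expandMap_tprod]⟩
  exact tprod_mem_minPow C (fun i => x (finProdFinEquiv (j, i))) (fun i => hx _)

end Aux



/-- **Lemma (entanglement annihilation is preserved under separable operations).** -/
theorem entanglementAnnihilating_separable_ops
    {V₁ V₂ V₃ V₄ : Type*}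
    [NormedAddCommGroup V₁] [NormedSpace ℝ V₁] [FiniteDimensional ℝ V₁]
    [NormedAddCommGroup V₂] [NormedSpace ℝ V₂] [FiniteDimensional ℝ V₂]
    [NormedAddCommGroup V₃] [NormedSpace ℝ V₃] [FiniteDimensional ℝ V₃]
    [NormedAddCommGroup V₄] [NormedSpace ℝ V₄] [FiniteDimensional ℝ V₄]
    (C₁ : Set V₁) (C₂ : Set V₂) (C₃ : Set V₃) (C₄ : Set V₄)
    (h₁ : IsProperCone C₁) (h₂ : IsProperCone C₂)
    (h₃ : IsProperCone C₃) (h₄ : IsProperCone C₄)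
    (k : ℕ) (hk : 1 ≤ k) (N : ℕ)
    (E : Fin N → (V₁ →ₗ[ℝ] ⨂[ℝ] _ : Fin k, V₂))
    (D : Fin N → ((⨂[ℝ] _ : Fin k, V₃) →ₗ[ℝ] V₄))
    (hE : ∀ i, Set.MapsTo (⇑(E i)) C₁ (maxTensorPow C₂ k))
    (hD : ∀ i, Set.MapsTo (⇑(D i)) (minTensorPow C₃ k) C₄)
    (P : V₂ →ₗ[ℝ] V₃) (hP : IsEntanglementAnnihilating C₂ C₃ P) :
    IsEntanglementAnnihilating C₁ C₄
      (∑ i, D i ∘ₗ (PiTensorProduct.map fun _ : Fin k => P) ∘ₗ E i) := by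
  classical
  intro m hm z hz
  -- expand the sum of maps over all choice functions
  have hexp : (PiTensorProduct.map fun _ : Fin m =>
        ∑ i, D i ∘ₗ (PiTensorProduct.map fun _ : Fin k => P) ∘ₗ E i) z
      = ∑ f : Fin m → Fin N, (PiTensorProduct.map fun j =>
          D (f j) ∘ₗ (PiTensorProduct.map fun _ : Fin k => P) ∘ₗ E (f j)) z := by
    have h := MultilinearMap.map_sum
      (PiTensorProduct.mapMultilinear ℝ (fun _ : Fin m => V₁) (fun _ : Fin m => V₄))
      (g := fun (_ : Fin m) (i : Fin N) => D i ∘ₗ (PiTensorProduct.map fun _ : Fin k => P) ∘ₗ E i)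
    simp only [PiTensorProduct.mapMultilinear_apply] at h
    rw [h, LinearMap.sum_apply]
  rw [hexp]
  have hC40 : (0 : V₄) ∈ C₄ := by
    have h := h₄.2.2.2.2
    have : (0 : V₄) ∈ C₄ ∩ (-C₄) := by rw [h]; rfl
    exact this.1
  refine sum_mem_minPow C₄ hC40 h₄.2.2.1 hm _ _ (fun f _ => ?_)
  -- fix a choice function f
  have hmk : 1 ≤ m * k := Nat.mul_pos hm hk
  -- step 1: into the nested max power
  have h1 : (PiTensorProduct.map fun j => E (f j)) z
      ∈ maxTensorPow (maxTensorPow C₂ k) m :=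
    mapsTo_maxPow C₁ (maxTensorPow C₂ k) _ (fun j => hE (f j)) hz
  -- step 2: pull back along the regrouping map
  obtain ⟨u, hu⟩ := expandMap_surjective (V := V₂) m k ((PiTensorProduct.map fun j => E (f j)) z)
  have hu_max : u ∈ maxTensorPow C₂ (m * k) := by
    intro φ hφ
    rw [← dualPairing_expand m k φ u, hu]
    refine h1 _ (fun j w hw => ?_)
    exact hw _ (fun i => hφ _)
  -- step 3: apply entanglement annihilation at level m*k
  have hv : (PiTensorProduct.map fun _ : Fin (m * k) => P) u ∈ minTensorPow C₃ (m * k) :=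
    hP (m * k) hmk hu_max
  -- step 4: regroup back into the nested min power
  have h4 : (PiTensorProduct.map fun _ : Fin m => PiTensorProduct.map fun _ : Fin k => P)
      ((PiTensorProduct.map fun j => E (f j)) z)
      ∈ minTensorPow (minTensorPow C₃ k) m := by
    have hnat := LinearMap.congr_fun (expand_naturality m k P) u
    simp only [LinearMap.coe_comp, Function.comp_apply] at hnat
    rw [← hu, hnat]
    exact expand_mem_nested_min C₃ m k hv
  -- step 5: apply the D maps
  have h5 : (PiTensorProduct.map fun j => D (f j))
      ((PiTensorProduct.map fun _ : Fin m => PiTensorProduct.map fun _ : Fin k => P)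
        ((PiTensorProduct.map fun j => E (f j)) z)) ∈ minTensorPow C₄ m :=
    mapsTo_minPow (minTensorPow C₃ k) C₄ _ (fun j => hD (f j)) h4
  -- assemble via map_comp
  have hcomp : (PiTensorProduct.map fun j =>
      D (f j) ∘ₗ (PiTensorProduct.map fun _ : Fin k => P) ∘ₗ E (f j))
      = (PiTensorProduct.map fun j => D (f j)) ∘ₗ
        (PiTensorProduct.map fun _ : Fin m => PiTensorProduct.map fun _ : Fin k => P) ∘ₗ
        (PiTensorProduct.map fun j => E (f j)) := by
    rw [← PiTensorProduct.map_comp, ← PiTensorProduct.map_comp]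
  rw [hcomp]
  simpa using h5

end
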